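/- Let d ≥ 2 and let ω ⊆ S^d be a measurable set whose closure is disjoint from the equator {x ∈ S^d : x₃ = x₄ = ⋯ = x_{d+1} = 0}. Then the ratio (∫_ω (x₁² + x₂²)^k dσ) / (∫_{S^d} (x₁² + x₂²)^k dσ) tends to 0 as k → ∞. Equivalently, for the L²-normalized spherical harmonics φ_k(x) = c_k (x₁ + i x₂)^k one has lim_{k→∞} ∫_ω |φ_k|² dσ = 0, so the densities |φ_k|² concentrate on the equator. -/

import Mathlib

open MeasureTheory Filter


open MeasureTheory Filter

section Aux

open Metric Set
open scoped Pointwise ENNReal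

/-- positivity of the surface measure on nonempty open subsets of the sphere -/
lemma toSphere_open_pos {n : ℕ} (hn : 0 < n)
    {U : Set (sphere (0 : EuclideanSpace ℝ (Fin n)) 1)} (hU : IsOpen U) (hne : U.Nonempty) :
    0 < (volume : Measure (EuclideanSpace ℝ (Fin n))).toSphere U := by
  set E := EuclideanSpace ℝ (Fin n)
  rw [Measure.toSphere_apply' _ hU.measurableSet]
  have hdim : (Module.finrank ℝ E : ℝ≥0∞) ≠ 0 := by
    simp [E, finrank_euclideanSpace, hn.ne']
  set h := homeomorphUnitSphereProd E
  set o : Ioi (0:ℝ) := ⟨1, mem_Ioi.2 one_pos⟩ with ho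
  set V : Set E := Subtype.val '' (h ⁻¹' (U ×ˢ Iio o)) with hV
  have hIio : IsOpen (Iio o) := by
    have : Iio o = Subtype.val ⁻¹' Iio (1:ℝ) := rfl
    rw [this]; exact isOpen_Iio.preimage continuous_subtype_val
  have hVopen : IsOpen V := by
    apply (isOpen_compl_singleton (x := (0:E))).isOpenMap_subtype_val
    exact (hU.prod hIio).preimage h.continuous
  have hVne : V.Nonempty := by
    obtain ⟨x, hx⟩ := hne
    have hxne : ((x : E)) ≠ 0 := ne_of_mem_sphere x.2 one_ne_zero
    refine ⟨(2⁻¹ : ℝ) • (x : E), ⟨(2⁻¹ : ℝ) • (x : E), by simp [hxne]⟩, ?_, rfl⟩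
    have hnorm : ‖(2⁻¹ : ℝ) • (x : E)‖ = 2⁻¹ := by
      rw [norm_smul, mem_sphere_zero_iff_norm.mp x.2]
      simp
    constructor
    · show (⟨_, _⟩ : sphere (0:E) 1) ∈ U
      have heq : ‖(2⁻¹ : ℝ) • (x : E)‖⁻¹ • ((2⁻¹ : ℝ) • (x : E)) = (x : E) := by
        rw [hnorm, smul_smul]; norm_num
      convert hx using 2
      rw [one_smul]; exact heq
    · show (⟨‖(2⁻¹ : ℝ) • (x : E)‖ / 1, _⟩ : Ioi (0:ℝ)) < o
      rw [ho, Subtype.mk_lt_mk, hnorm]; norm_num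
  have hsub : V ⊆ Ioo (0:ℝ) 1 • (Subtype.val '' U) := by
    rintro y ⟨⟨z, hz⟩, hmem, rfl⟩
    simp only [mem_preimage, mem_prod] at hmem
    have hznorm : 0 < ‖z‖ := norm_pos_iff.2 hz
    refine ⟨‖z‖, ⟨hznorm, by have h2 : ‖z‖ / 1 < 1 := hmem.2; simpa using h2⟩, ‖z‖⁻¹ • z, ⟨_, hmem.1, one_smul ℝ _⟩, ?_⟩
    show ‖z‖ • ‖z‖⁻¹ • z = z
    rw [smul_smul, mul_inv_cancel₀ hznorm.ne', one_smul]
  exact ENNReal.mul_pos hdim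
    ((hVopen.measure_pos volume hVne).trans_le (measure_mono hsub)).ne'

/-- the function `x ↦ x₀² + x₁²` on the sphere -/
noncomputable def sphF (d : ℕ) (x : sphere (0 : EuclideanSpace ℝ (Fin (d+1))) 1) : ℝ :=
  (x : EuclideanSpace ℝ (Fin (d+1))) 0 ^ 2 + (x : EuclideanSpace ℝ (Fin (d+1))) 1 ^ 2

lemma sphF_cont (d : ℕ) : Continuous (sphF d) := by
  apply Continuous.add
  · fun_prop
  · fun_prop

lemma sphF_nonneg (d : ℕ) (x : sphere (0 : EuclideanSpace ℝ (Fin (d+1))) 1) : 0 ≤ sphF d x := by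
  unfold sphF; positivity

lemma sphere_sum_sq (d : ℕ) (x : sphere (0 : EuclideanSpace ℝ (Fin (d+1))) 1) :
    ∑ i, ((x : EuclideanSpace ℝ (Fin (d+1))) i)^2 = 1 := by
  have h := mem_sphere_zero_iff_norm.mp x.2
  rw [EuclideanSpace.norm_eq] at h
  have h0 : (0:ℝ) ≤ ∑ i, ‖(x : EuclideanSpace ℝ (Fin (d+1))) i‖^2 := by positivity
  have hs : ∑ i, ‖(x : EuclideanSpace ℝ (Fin (d+1))) i‖ ^2 = 1 := by nlinarith [Real.sq_sqrt h0]
  simpa [sq_abs] using hs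

lemma fin_zero_ne_one (d : ℕ) (hd : 2 ≤ d) : (0 : Fin (d+1)) ≠ 1 := by
  intro h
  have h0 : ((0 : Fin (d+1)) : ℕ) = 0 := rfl
  have h1 : ((1 : Fin (d+1)) : ℕ) = 1 := by
    rw [Fin.val_one']
    exact Nat.mod_eq_of_lt (by omega)
  rw [h] at h0; omega

lemma sphF_pair (d : ℕ) (hd : 2 ≤ d) (x : sphere (0 : EuclideanSpace ℝ (Fin (d+1))) 1) :
    sphF d x = ∑ i ∈ ({0, 1} : Finset (Fin (d+1))), ((x : EuclideanSpace ℝ (Fin (d+1))) i)^2 := by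
  rw [Finset.sum_pair (fin_zero_ne_one d hd)]; rfl

lemma sphF_le_one (d : ℕ) (hd : 2 ≤ d) (x : sphere (0 : EuclideanSpace ℝ (Fin (d+1))) 1) :
    sphF d x ≤ 1 := by
  rw [sphF_pair d hd]
  calc ∑ i ∈ ({0, 1} : Finset (Fin (d+1))), ((x : EuclideanSpace ℝ (Fin (d+1))) i)^2
      ≤ ∑ i, ((x : EuclideanSpace ℝ (Fin (d+1))) i)^2 :=
        Finset.sum_le_sum_of_subset_of_nonneg (Finset.subset_univ _) (fun i _ _ => sq_nonneg _)
    _ = 1 := sphere_sum_sq d x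

lemma sphF_lt_one (d : ℕ) (hd : 2 ≤ d) (x : sphere (0 : EuclideanSpace ℝ (Fin (d+1))) 1)
    (j : Fin (d+1)) (hj : 2 ≤ (j : ℕ)) (hxj : (x : EuclideanSpace ℝ (Fin (d+1))) j ≠ 0) :
    sphF d x < 1 := by
  have hjne : j ∉ ({0, 1} : Finset (Fin (d+1))) := by
    intro hmem
    rcases Finset.mem_insert.mp hmem with h | h
    · rw [h] at hj; simp at hj
    · rw [Finset.mem_singleton] at h
      rw [h] at hj
      have h1 : ((1 : Fin (d+1)) : ℕ) = 1 := by
        rw [Fin.val_one']; exact Nat.mod_eq_of_lt (by omega)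
      omega
  have hkey : sphF d x + ((x : EuclideanSpace ℝ (Fin (d+1))) j)^2 ≤ 1 := by
    rw [sphF_pair d hd, add_comm]
    calc ((x : EuclideanSpace ℝ (Fin (d+1))) j)^2
          + ∑ i ∈ ({0, 1} : Finset (Fin (d+1))), ((x : EuclideanSpace ℝ (Fin (d+1))) i)^2
        = ∑ i ∈ insert j ({0, 1} : Finset (Fin (d+1))), ((x : EuclideanSpace ℝ (Fin (d+1))) i)^2 :=
          (Finset.sum_insert (f := fun i => ((x : EuclideanSpace ℝ (Fin (d+1))) i)^2) hjne).symm
      _ ≤ ∑ i, ((x : EuclideanSpace ℝ (Fin (d+1))) i)^2 :=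
          Finset.sum_le_sum_of_subset_of_nonneg (Finset.subset_univ _) (fun i _ _ => sq_nonneg _)
      _ = 1 := sphere_sum_sq d x
  have hpos : 0 < ((x : EuclideanSpace ℝ (Fin (d+1))) j)^2 :=
    lt_of_le_of_ne (sq_nonneg _) (Ne.symm (pow_ne_zero 2 hxj))
  linarith

lemma factorial_add_le (k m : ℕ) : (k + m).factorial ≤ k.factorial * (k + m)^m := by
  induction m with
  | zero => simp
  | succ m ih =>
    have : (k + (m+1)).factorial = (k + m + 1) * (k + m).factorial := by
      rw [← Nat.add_assoc, Nat.factorial_succ]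
    rw [this]
    calc (k + m + 1) * (k + m).factorial
        ≤ (k + m + 1) * (k.factorial * (k + m)^m) := Nat.mul_le_mul_left _ ih
      _ ≤ (k + m + 1) * (k.factorial * (k + m + 1)^m) := by
          exact Nat.mul_le_mul_left _ (Nat.mul_le_mul_left _
            (Nat.pow_le_pow_left (Nat.le_succ _) m))
      _ = k.factorial * (k + (m+1))^(m+1) := by ring_nf
  
lemma norm_sq_aux (t u v : ℝ) (ht : 0 ≤ t) (k : ℕ) :
    ‖((Real.sqrt t : ℝ) : ℂ) * ((u:ℂ) + Complex.I * (v:ℂ))^k‖^2 = t * (u^2+v^2)^k := by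
  have h1 : ‖((Real.sqrt t : ℝ) : ℂ)‖^2 = t := by
    rw [Complex.norm_real, Real.norm_eq_abs, sq_abs, Real.sq_sqrt ht]
  have h2 : ‖(u:ℂ) + Complex.I*(v:ℂ)‖^2 = u^2+v^2 := by
    rw [mul_comm, Complex.sq_norm, Complex.normSq_add_mul_I]
  rw [norm_mul, norm_pow, mul_pow, ← pow_mul, mul_comm k 2, pow_mul, h1, h2]

end Aux

/-- Let `d ≥ 2` and let `ω` be a measurable subset of the unit sphere
`S^d ⊆ ℝ^{d+1}` whose closure is disjoint from the equator
`{x ∈ S^d : x₃ = ⋯ = x_{d+1} = 0}`.  Then, with `σ` the canonical surface measure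
(`volume.toSphere`), the ratio `(∫_ω (x₁²+x₂²)^k dσ) / (∫_{S^d} (x₁²+x₂²)^k dσ)` tends to `0`
as `k → ∞`; equivalently, for the `L²`-normalized spherical harmonics
`φ_k = c_k (x₁ + i x₂)^k`, `c_k = (Γ(k+(d+1)/2)/(2π^{(d+1)/2}k!))^{1/2}`, one has
`∫_ω |φ_k|² dσ → 0`: the densities `|φ_k|²` concentrate on the equator. -/
theorem stmt_4 (d : ℕ) (hd : 2 ≤ d)
    (ω : Set (Metric.sphere (0 : EuclideanSpace ℝ (Fin (d + 1))) 1))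
    (hω : MeasurableSet ω)
    (hdisj : closure ω ∩
        {x : Metric.sphere (0 : EuclideanSpace ℝ (Fin (d + 1))) 1 |
          ∀ j : Fin (d + 1), 2 ≤ (j : ℕ) → (x : EuclideanSpace ℝ (Fin (d + 1))) j = 0}
      = ∅) :
    Tendsto (fun k : ℕ =>
        (∫ x in ω,
            ((x : EuclideanSpace ℝ (Fin (d + 1))) 0 ^ 2
              + (x : EuclideanSpace ℝ (Fin (d + 1))) 1 ^ 2) ^ k
          ∂(volume : Measure (EuclideanSpace ℝ (Fin (d + 1)))).toSphere)
        / (∫ x : Metric.sphere (0 : EuclideanSpace ℝ (Fin (d + 1))) 1,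
            ((x : EuclideanSpace ℝ (Fin (d + 1))) 0 ^ 2
              + (x : EuclideanSpace ℝ (Fin (d + 1))) 1 ^ 2) ^ k
          ∂(volume : Measure (EuclideanSpace ℝ (Fin (d + 1)))).toSphere))
      atTop (nhds 0)
    ∧ Tendsto (fun k : ℕ =>
        ∫ x in ω,
          ‖(Real.sqrt (Real.Gamma ((k : ℝ) + ((d : ℝ) + 1) / 2)
                / (2 * Real.pi ^ (((d : ℝ) + 1) / 2) * (k.factorial : ℝ))) : ℂ)
              * (((x : EuclideanSpace ℝ (Fin (d + 1))) 0 : ℂ)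
                  + Complex.I * ((x : EuclideanSpace ℝ (Fin (d + 1))) 1 : ℂ)) ^ k‖ ^ 2
          ∂(volume : Measure (EuclideanSpace ℝ (Fin (d + 1)))).toSphere)
      atTop (nhds 0) := by
  by_cases hne : ω.Nonempty
  case neg =>
    rw [Set.not_nonempty_iff_eq_empty] at hne
    subst hne
    constructor
    · simp only [Measure.restrict_empty, integral_zero_measure, zero_div]
      exact tendsto_const_nhds
    · simp only [Measure.restrict_empty, integral_zero_measure]
      exact tendsto_const_nhds
  case pos =>
    set σ := (volume : Measure (EuclideanSpace ℝ (Fin (d + 1)))).toSphere with hσdef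
    -- maximum of sphF on closure ω
    have hK : IsCompact (closure ω) := isClosed_closure.isCompact
    obtain ⟨x₀, hx₀mem, hx₀max⟩ := hK.exists_isMaxOn hne.closure (sphF_cont d).continuousOn
    have hx₀ne : ¬ (∀ j : Fin (d + 1), 2 ≤ (j : ℕ) →
        (x₀ : EuclideanSpace ℝ (Fin (d + 1))) j = 0) := by
      intro hmem
      have : x₀ ∈ closure ω ∩ {x : Metric.sphere (0 : EuclideanSpace ℝ (Fin (d + 1))) 1 |
          ∀ j : Fin (d + 1), 2 ≤ (j : ℕ) → (x : EuclideanSpace ℝ (Fin (d + 1))) j = 0} :=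
        ⟨hx₀mem, hmem⟩
      rw [hdisj] at this
      exact Set.notMem_empty x₀ this
    push_neg at hx₀ne
    obtain ⟨j, hj2, hjne⟩ := hx₀ne
    set a : ℝ := max (sphF d x₀) 2⁻¹ with hadef
    have ha1 : a < 1 := max_lt (sphF_lt_one d hd x₀ j hj2 hjne) (by norm_num)
    have ha0 : (0:ℝ) < a := lt_of_lt_of_le (by norm_num) (le_max_right _ _)
    have hfa : ∀ x ∈ ω, sphF d x ≤ a := fun x hx =>
      le_trans (hx₀max (subset_closure hx)) (le_max_left _ _)
    have hab : a < (1+a)/2 := by linarith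
    have hb1 : (1+a)/2 < 1 := by linarith
    have hb0 : (0:ℝ) < (1+a)/2 := by linarith
    -- the open set U
    set U : Set (Metric.sphere (0 : EuclideanSpace ℝ (Fin (d + 1))) 1) :=
      {x | (1+a)/2 < sphF d x} with hUdef
    have hUopen : IsOpen U := isOpen_lt continuous_const (sphF_cont d)
    have hnorthmem : EuclideanSpace.single (0 : Fin (d+1)) (1:ℝ) ∈
        Metric.sphere (0 : EuclideanSpace ℝ (Fin (d + 1))) 1 := by
      rw [mem_sphere_zero_iff_norm, EuclideanSpace.norm_single]
      norm_num
    have hnorth : sphF d ⟨EuclideanSpace.single (0 : Fin (d+1)) (1:ℝ), hnorthmem⟩ = 1 := by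
      show (EuclideanSpace.single (0 : Fin (d+1)) (1:ℝ)) 0 ^ 2
        + (EuclideanSpace.single (0 : Fin (d+1)) (1:ℝ)) 1 ^ 2 = 1
      rw [EuclideanSpace.single_apply, EuclideanSpace.single_apply]
      simp [(fin_zero_ne_one d hd).symm]
    have hUne : U.Nonempty := by
      refine ⟨⟨EuclideanSpace.single (0 : Fin (d+1)) (1:ℝ), hnorthmem⟩, ?_⟩
      show (1+a)/2 < sphF d _
      rw [hnorth]; linarith
    have hσU : 0 < σ U := toSphere_open_pos (by omega) hUopen hUne
    have hσUr : 0 < (σ U).toReal := ENNReal.toReal_pos hσU.ne' (measure_ne_top _ _)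
    have hσS0 : 0 ≤ (σ Set.univ).toReal := ENNReal.toReal_nonneg
    -- integrability
    have hint : ∀ k : ℕ, Integrable (fun x => sphF d x ^ k) σ := fun k =>
      ((sphF_cont d).pow k).integrable_of_hasCompactSupport
        (HasCompactSupport.of_compactSpace _)
    set N : ℕ → ℝ := fun k => ∫ x in ω, sphF d x ^ k ∂σ with hNdef
    set D : ℕ → ℝ := fun k => ∫ x, sphF d x ^ k ∂σ with hDdef
    have hN0 : ∀ k, 0 ≤ N k := fun k =>
      setIntegral_nonneg hω fun x _ => pow_nonneg (sphF_nonneg d x) k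
    have hNle : ∀ k, N k ≤ a^k * (σ Set.univ).toReal := by
      intro k
      calc N k ≤ ∫ _x in ω, a^k ∂σ :=
            setIntegral_mono_on ((hint k).integrableOn)
              (integrableOn_const (measure_ne_top _ _) enorm_ne_top) hω
              (fun x hx => pow_le_pow_left₀ (sphF_nonneg d x) (hfa x hx) k)
        _ = a^k * (σ ω).toReal := by rw [setIntegral_const, smul_eq_mul, mul_comm]; rfl
        _ ≤ a^k * (σ Set.univ).toReal :=
            mul_le_mul_of_nonneg_left
              (ENNReal.toReal_mono (measure_ne_top _ _) (measure_mono (Set.subset_univ _)))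
              (pow_nonneg ha0.le k)
    have hDge : ∀ k, ((1+a)/2)^k * (σ U).toReal ≤ D k := by
      intro k
      calc ((1+a)/2)^k * (σ U).toReal = ∫ _x in U, ((1+a)/2)^k ∂σ := by
            rw [setIntegral_const, smul_eq_mul, mul_comm]; rfl
        _ ≤ ∫ x in U, sphF d x ^ k ∂σ :=
            setIntegral_mono_on (integrableOn_const (measure_ne_top _ _) enorm_ne_top)
              ((hint k).integrableOn) hUopen.measurableSet
              (fun x hx => pow_le_pow_left₀ hb0.le (le_of_lt hx) k)
        _ ≤ D k := setIntegral_le_integral (hint k)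
              (Filter.Eventually.of_forall fun x => pow_nonneg (sphF_nonneg d x) k)
    have hDpos : ∀ k, 0 < D k := fun k => lt_of_lt_of_le (by positivity) (hDge k)
    constructor
    · -- first component
      show Tendsto (fun k : ℕ => N k / D k) atTop (nhds 0)
      have hg : Tendsto (fun k : ℕ =>
          ((σ Set.univ).toReal / (σ U).toReal) * (a / ((1+a)/2))^k) atTop (nhds 0) := by
        have := (tendsto_pow_atTop_nhds_zero_of_lt_one
          (div_nonneg ha0.le hb0.le) ((div_lt_one hb0).mpr hab)).const_mul
          ((σ Set.univ).toReal / (σ U).toReal)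
        simpa using this
      refine squeeze_zero (fun k => div_nonneg (hN0 k) (hDpos k).le) (fun k => ?_) hg
      calc N k / D k ≤ (a^k * (σ Set.univ).toReal) / (((1+a)/2)^k * (σ U).toReal) :=
            div_le_div₀ (by positivity) (hNle k) (by positivity) (hDge k)
        _ = ((σ Set.univ).toReal / (σ U).toReal) * (a / ((1+a)/2))^k := by
            rw [div_pow]; field_simp; rw [div_pow, mul_pow, mul_assoc ((σ Set.univ).toReal), mul_div_assoc', mul_div_cancel_left₀ _ (pow_ne_zero k (by linarith : (1:ℝ) + a ≠ 0))]; ring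
    · -- second component
      set t : ℕ → ℝ := fun k => Real.Gamma ((k : ℝ) + ((d : ℝ) + 1) / 2)
        / (2 * Real.pi ^ (((d : ℝ) + 1) / 2) * (k.factorial : ℝ)) with htdef
      have hπ : (0:ℝ) < Real.pi ^ (((d : ℝ) + 1) / 2) :=
        Real.rpow_pos_of_pos Real.pi_pos _
      have ht0 : ∀ k, 0 ≤ t k := by
        intro k
        apply div_nonneg
        · exact (Real.Gamma_pos_of_pos (by positivity)).le
        · positivity
      have hpt : ∀ (k : ℕ) (x : Metric.sphere (0 : EuclideanSpace ℝ (Fin (d + 1))) 1),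
          ‖(Real.sqrt (t k) : ℂ)
              * (((x : EuclideanSpace ℝ (Fin (d + 1))) 0 : ℂ)
                  + Complex.I * ((x : EuclideanSpace ℝ (Fin (d + 1))) 1 : ℂ)) ^ k‖ ^ 2
            = t k * sphF d x ^ k := fun k x =>
        norm_sq_aux (t k) _ _ (ht0 k) k
      have key : Tendsto (fun k : ℕ => t k * N k) atTop (nhds 0) := by
        -- bound on t for k ≥ 1
        have hts : ∀ k : ℕ, 1 ≤ k →
            t k ≤ ((k+d : ℕ) : ℝ)^d / (2 * Real.pi ^ (((d : ℝ) + 1) / 2)) := by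
          intro k hk
          have hkf : (0:ℝ) < (k.factorial : ℝ) := by
            exact_mod_cast k.factorial_pos
          have hΓ : Real.Gamma ((k : ℝ) + ((d : ℝ) + 1) / 2)
              ≤ ((k + d - 1).factorial : ℝ) := by
            have h1 : Real.Gamma ((k : ℝ) + ((d : ℝ) + 1) / 2)
                ≤ Real.Gamma (((k + d - 1 : ℕ) : ℝ) + 1) := by
              apply Real.Gamma_strictMonoOn_Ici.monotoneOn
              · have hk1 : (1:ℝ) ≤ (k:ℝ) := by exact_mod_cast hk
                have hd2 : (2:ℝ) ≤ (d:ℝ) := by exact_mod_cast hd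
                simp only [Set.mem_Ici]; linarith
              · have : (2:ℕ) ≤ k + d - 1 := by omega
                have : (2:ℝ) ≤ ((k + d - 1 : ℕ) : ℝ) := by exact_mod_cast this
                simp only [Set.mem_Ici]; linarith
              · have hcast : ((k + d - 1 : ℕ) : ℝ) + 1 = (k:ℝ) + (d:ℝ) := by
                  have : (k + d - 1) + 1 = k + d := by omega
                  have := congrArg (fun n : ℕ => (n:ℝ)) this
                  push_cast at this
                  linarith
                have hd2 : (2:ℝ) ≤ (d:ℝ) := by exact_mod_cast hd
                rw [hcast]; linarith
            rwa [Real.Gamma_nat_eq_factorial] at h1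
          have hfact : ((k + d - 1).factorial : ℝ)
              ≤ (k.factorial : ℝ) * ((k+d : ℕ) : ℝ)^d := by
            have hn : (k + d - 1).factorial ≤ k.factorial * (k+d)^d := by
              have h3 : k + d - 1 = k + (d-1) := by omega
              calc (k + d - 1).factorial = (k + (d-1)).factorial := by rw [h3]
                _ ≤ k.factorial * (k + (d-1))^(d-1) := factorial_add_le k (d-1)
                _ ≤ k.factorial * (k+d)^d := Nat.mul_le_mul_left _
                    (le_trans (Nat.pow_le_pow_left (by omega) _)
                      (Nat.pow_le_pow_right (by omega) (by omega)))
            exact_mod_cast hn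
          calc t k ≤ ((k.factorial : ℝ) * ((k+d : ℕ) : ℝ)^d)
                / (2 * Real.pi ^ (((d : ℝ) + 1) / 2) * (k.factorial : ℝ)) := by
                apply (div_le_div_iff_of_pos_right (by positivity)).mpr
                exact hΓ.trans hfact
            _ = ((k+d : ℕ) : ℝ)^d / (2 * Real.pi ^ (((d : ℝ) + 1) / 2)) := by
                field_simp
        -- limit of the bounding sequence
        have base : Tendsto (fun n : ℕ => (n:ℝ)^d * a^n) atTop (nhds 0) :=
          tendsto_pow_const_mul_const_pow_of_lt_one d ha0.le ha1
        have shift : Tendsto (fun k : ℕ => (((k+d : ℕ)) : ℝ)^d * a^(k+d)) atTop (nhds 0) :=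
          base.comp (tendsto_add_atTop_nat d)
        have shift2 : Tendsto (fun k : ℕ => ((k+d : ℕ) : ℝ)^d * a^k) atTop (nhds 0) := by
          have hmul := shift.mul_const ((a⁻¹)^d)
          rw [zero_mul] at hmul
          refine hmul.congr fun k => ?_
          rw [pow_add]
          field_simp
          ring
          rw [← mul_pow, mul_inv_cancel₀ ha0.ne', one_pow]
        have hg : Tendsto (fun k : ℕ =>
            ((σ Set.univ).toReal / (2 * Real.pi ^ (((d : ℝ) + 1) / 2)))
              * (((k+d : ℕ) : ℝ)^d * a^k)) atTop (nhds 0) := by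
          have := shift2.const_mul ((σ Set.univ).toReal / (2 * Real.pi ^ (((d : ℝ) + 1) / 2)))
          simpa using this
        refine squeeze_zero' (Filter.Eventually.of_forall fun k =>
          mul_nonneg (ht0 k) (hN0 k)) ?_ hg
        filter_upwards [eventually_ge_atTop 1] with k hk
        calc t k * N k ≤ (((k+d : ℕ) : ℝ)^d / (2 * Real.pi ^ (((d : ℝ) + 1) / 2)))
              * (a^k * (σ Set.univ).toReal) :=
            mul_le_mul (hts k hk) (hNle k) (hN0 k) (by positivity)
          _ = ((σ Set.univ).toReal / (2 * Real.pi ^ (((d : ℝ) + 1) / 2)))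
              * (((k+d : ℕ) : ℝ)^d * a^k) := by ring
      refine Tendsto.congr (fun k => ?_) key
      calc t k * N k = ∫ x in ω, t k * sphF d x ^ k ∂σ :=
            (integral_const_mul (t k) _).symm
        _ = _ := setIntegral_congr_fun hω fun x _ => (hpt k x).symm
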